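/- For every fixed ρ² > 0 and x ∈ ℝ, the hyperbolic density converges pointwise to the normal density as the shape parameter tends to infinity: lim_{η → ∞} (2 √(η ρ²) K₁(η))^(−1) exp(−√(η (η + x²/ρ²))) = (2π ρ²)^(−1/2) exp(−x²/(2 ρ²)). -/

import Mathlib

open MeasureTheory Real Filter

/-- The modified Bessel function of the second kind of order `ν`, for `z > 0`. -/
noncomputable def besselK (ν z : ℝ) : ℝ :=
  ∫ t in Set.Ioi (0 : ℝ), Real.exp (-z * Real.cosh t) * Real.cosh (ν * t)



lemma cosh_sub_one_eq (u : ℝ) : Real.cosh u - 1 = 2 * Real.sinh (u/2) ^ 2 := by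
  have h := Real.cosh_two_mul (u/2)
  rw [show 2*(u/2) = u by ring] at h
  rw [h, Real.cosh_sq]; ring

lemma sq_div_two_le_cosh (u : ℝ) (hu : 0 ≤ u) : u^2/2 ≤ Real.cosh u - 1 := by
  have h1 : u/2 ≤ Real.sinh (u/2) := Real.self_le_sinh_iff.mpr (by positivity)
  have h := Real.cosh_two_mul (u/2)
  rw [show 2*(u/2) = u by ring] at h
  nlinarith [Real.cosh_sq (u/2)]

lemma sinh_div_tendsto : Tendsto (fun v : ℝ => Real.sinh v / v) (nhdsWithin 0 {(0:ℝ)}ᶜ) (nhds 1) := by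
  have h := hasDerivAt_iff_tendsto_slope.mp (Real.hasDerivAt_sinh 0)
  simp only [Real.cosh_zero] at h
  refine h.congr (fun v => ?_)
  simp [slope_def_field, Real.sinh_zero]

lemma tendsto_sqrt_atTop' : Tendsto Real.sqrt atTop atTop := by
  refine tendsto_atTop_atTop.mpr fun b => ⟨(max b 0)^2, fun a ha => ?_⟩
  have h := Real.sqrt_le_sqrt ha
  rw [Real.sqrt_sq (le_max_right b 0)] at h
  exact le_trans (le_max_left b 0) h

lemma besselK_asymp :
    Tendsto (fun η : ℝ => Real.sqrt η * (Real.exp η * besselK 1 η)) atTop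
      (nhds (Real.sqrt (π/2))) := by
  -- the rescaled integrand
  set G : ℝ → ℝ → ℝ := fun η s =>
    Real.exp (-(η * (Real.cosh ((Real.sqrt η)⁻¹ * s) - 1))) * Real.cosh ((Real.sqrt η)⁻¹ * s) with hG
  have key : ∀ η : ℝ, 0 < η →
      Real.sqrt η * (Real.exp η * besselK 1 η) = ∫ s in Set.Ioi (0:ℝ), G η s := by
    intro η hη
    have h1 : Real.exp η * besselK 1 η
        = ∫ t in Set.Ioi (0:ℝ), Real.exp (-(η * (Real.cosh t - 1))) * Real.cosh t := by
      rw [besselK, ← integral_const_mul]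
      refine integral_congr_ae (Filter.Eventually.of_forall fun t => ?_)
      show Real.exp η * (Real.exp (-η * Real.cosh t) * Real.cosh (1*t))
          = Real.exp (-(η * (Real.cosh t - 1))) * Real.cosh t
      rw [one_mul, ← mul_assoc, ← Real.exp_add]
      congr 2
      ring
    have h2 := integral_comp_mul_left_Ioi
      (fun t => Real.exp (-(η * (Real.cosh t - 1))) * Real.cosh t) 0
      (inv_pos.mpr (Real.sqrt_pos.mpr hη))
    rw [mul_zero] at h2
    rw [h1, ← smul_eq_mul, ← inv_inv (Real.sqrt η), ← h2]
  -- dominated convergence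
  have hbound_int : Integrable (fun s : ℝ => Real.exp (-(s^2/2)) * Real.cosh s)
      (volume.restrict (Set.Ioi (0:ℝ))) := by
    have hg : Integrable (fun s : ℝ => Real.exp (1/2) * Real.exp (-(1/2) * (s-1)^2)) := by
      exact ((integrable_exp_neg_mul_sq (by norm_num : (0:ℝ) < 1/2)).comp_sub_right 1).const_mul _
    refine Integrable.mono' hg.restrict ?_ ?_
    · exact (Continuous.mul (by continuity) Real.continuous_cosh).aestronglyMeasurable
    · filter_upwards [ae_restrict_mem measurableSet_Ioi] with s hs
      have hs' : (0:ℝ) < s := hs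
      have hcosh : Real.cosh s ≤ Real.exp s := by
        rw [Real.cosh_eq]
        have : Real.exp (-s) ≤ Real.exp s := Real.exp_le_exp.mpr (by linarith)
        linarith
      have hpos : (0:ℝ) < Real.exp (-(s^2/2)) * Real.cosh s := by positivity
      rw [Real.norm_eq_abs, abs_of_pos hpos]
      calc Real.exp (-(s^2/2)) * Real.cosh s ≤ Real.exp (-(s^2/2)) * Real.exp s := by
            exact mul_le_mul_of_nonneg_left hcosh (Real.exp_pos _).le
        _ = Real.exp (1/2) * Real.exp (-(1/2) * (s-1)^2) := by
            rw [← Real.exp_add, ← Real.exp_add]; ring_nf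
  have hconv : Tendsto (fun η : ℝ => ∫ s in Set.Ioi (0:ℝ), G η s) atTop
      (nhds (∫ s in Set.Ioi (0:ℝ), Real.exp (-(s^2/2)))) := by
    refine tendsto_integral_filter_of_dominated_convergence
      (fun s => Real.exp (-(s^2/2)) * Real.cosh s) ?_ ?_ hbound_int ?_
    · filter_upwards [eventually_gt_atTop (0:ℝ)] with η hη
      exact (Continuous.mul (by continuity) (by continuity)).aestronglyMeasurable
    · filter_upwards [eventually_ge_atTop (1:ℝ)] with η hη
      filter_upwards [ae_restrict_mem measurableSet_Ioi] with s hs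
      have hs' : (0:ℝ) < s := hs
      have hη0 : (0:ℝ) < η := by linarith
      have hsq : (1:ℝ) ≤ Real.sqrt η := by
        rw [show (1:ℝ) = Real.sqrt 1 by simp]; exact Real.sqrt_le_sqrt hη
      have hsqpos : (0:ℝ) < Real.sqrt η := by linarith
      set u := (Real.sqrt η)⁻¹ * s with hu
      have hu0 : 0 < u := by positivity
      have hus : u ≤ s := by
        rw [hu]
        calc (Real.sqrt η)⁻¹ * s ≤ 1 * s := by
              apply mul_le_mul_of_nonneg_right _ hs'.le
              exact inv_le_one_of_one_le₀ hsq
          _ = s := one_mul s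
      have hGpos : 0 < G η s := by rw [hG]; positivity
      rw [Real.norm_eq_abs, abs_of_pos hGpos, hG]
      have h1 : Real.exp (-(η * (Real.cosh u - 1))) ≤ Real.exp (-(s^2/2)) := by
        apply Real.exp_le_exp.mpr
        have := sq_div_two_le_cosh u hu0.le
        have hu2 : u^2 = s^2/η := by
          rw [hu, mul_pow, inv_pow, Real.sq_sqrt hη0.le]; ring
        rw [neg_le_neg_iff]
        calc s^2/2 = η * (u^2/2) := by rw [hu2]; field_simp
          _ ≤ η * (Real.cosh u - 1) := by
              exact mul_le_mul_of_nonneg_left this hη0.le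
      have h2 : Real.cosh u ≤ Real.cosh s := by
        refine Real.cosh_le_cosh.mpr ?_
        rw [abs_of_pos hu0, abs_of_pos hs']; exact hus
      exact mul_le_mul h1 h2 (Real.cosh_pos _).le (Real.exp_pos _).le
    · filter_upwards [ae_restrict_mem measurableSet_Ioi] with s hs
      have hs' : (0:ℝ) < s := hs
      -- pointwise limit
      have hv : Tendsto (fun η : ℝ => s/(2*Real.sqrt η)) atTop (nhdsWithin 0 {(0:ℝ)}ᶜ) := by
        rw [tendsto_nhdsWithin_iff]
        constructor
        · have : Tendsto (fun η : ℝ => 2*Real.sqrt η) atTop atTop :=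
            (tendsto_sqrt_atTop'.const_mul_atTop (by norm_num))
          simpa [div_eq_mul_inv] using (tendsto_inv_atTop_zero.comp this).const_mul s
        · filter_upwards [eventually_gt_atTop (0:ℝ)] with η hη
          have : 0 < s/(2*Real.sqrt η) := by positivity
          simp [this.ne']
      have hratio : Tendsto (fun η : ℝ => Real.sinh (s/(2*Real.sqrt η)) / (s/(2*Real.sqrt η)))
          atTop (nhds 1) := sinh_div_tendsto.comp hv
      have harg : Tendsto (fun η : ℝ => η * (Real.cosh ((Real.sqrt η)⁻¹ * s) - 1)) atTop
          (nhds (s^2/2)) := by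
        have heq : ∀ᶠ η : ℝ in atTop,
            η * (Real.cosh ((Real.sqrt η)⁻¹ * s) - 1)
              = (s^2/2) * (Real.sinh (s/(2*Real.sqrt η)) / (s/(2*Real.sqrt η)))^2 := by
          filter_upwards [eventually_gt_atTop (0:ℝ)] with η hη
          have hsqpos : (0:ℝ) < Real.sqrt η := Real.sqrt_pos.mpr hη
          have hvpos : (0:ℝ) < s/(2*Real.sqrt η) := by positivity
          rw [cosh_sub_one_eq]
          rw [show (Real.sqrt η)⁻¹ * s / 2 = s/(2*Real.sqrt η) by ring]
          rw [div_pow, div_pow]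
          have h4 : (2*Real.sqrt η)^2 = 4*η := by
            rw [mul_pow, Real.sq_sqrt hη.le]; norm_num
          field_simp [h4]
          ring
          exact (Real.sq_sqrt hη.le).symm
        have hlim : Tendsto (fun η : ℝ =>
            (s^2/2) * (Real.sinh (s/(2*Real.sqrt η)) / (s/(2*Real.sqrt η)))^2) atTop
            (nhds (s^2/2)) := by
          have := ((hratio.pow 2).const_mul (s^2/2))
          simpa using this
        exact hlim.congr' (heq.mono fun η h => h.symm)
      have hcosh1 : Tendsto (fun η : ℝ => Real.cosh ((Real.sqrt η)⁻¹ * s)) atTop (nhds 1) := by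
        have h0 : Tendsto (fun η : ℝ => (Real.sqrt η)⁻¹ * s) atTop (nhds 0) := by
          simpa using (tendsto_inv_atTop_zero.comp tendsto_sqrt_atTop').mul_const s
        have := (Real.continuous_cosh.tendsto 0).comp h0
        simpa [Function.comp_def] using this
      have : Tendsto (fun η => G η s) atTop (nhds (Real.exp (-(s^2/2)) * 1)) := by
        exact ((Real.continuous_exp.tendsto _).comp harg.neg).mul hcosh1
      simpa using this
  have hval : (∫ s in Set.Ioi (0:ℝ), Real.exp (-(s^2/2))) = Real.sqrt (π/2) := by
    have h := integral_gaussian_Ioi (1/2)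
    have heq : (∫ s in Set.Ioi (0:ℝ), Real.exp (-(s^2/2)))
        = ∫ s in Set.Ioi (0:ℝ), Real.exp (-(1/2)*s^2) := by
      refine integral_congr_ae (Filter.Eventually.of_forall fun s => ?_)
      norm_num; ring_nf
    rw [heq, h]
    rw [Real.sqrt_div pi_pos.le, Real.sqrt_div pi_pos.le]
    have h2 : Real.sqrt 2 * Real.sqrt 2 = 2 := Real.mul_self_sqrt (by norm_num)
    have h' : Real.sqrt (1/2) = 1 / Real.sqrt 2 := by
      rw [show (1:ℝ)/2 = 2⁻¹ by norm_num, Real.sqrt_inv]; simp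
    rw [h']
    have hs2 : (0:ℝ) < Real.sqrt 2 := Real.sqrt_pos.mpr (by norm_num)
    field_simp
    nlinarith [Real.sqrt_nonneg π]
  rw [← hval]
  refine hconv.congr' ?_
  filter_upwards [eventually_gt_atTop (0:ℝ)] with η hη
  exact (key η hη).symm

lemma exp_part_tendsto (c : ℝ) (hc : 0 ≤ c) :
    Tendsto (fun η : ℝ => η - Real.sqrt (η * (η + c))) atTop (nhds (-c/2)) := by
  have heq : ∀ᶠ η : ℝ in atTop,
      η - Real.sqrt (η * (η + c)) = -c / (1 + Real.sqrt (1 + c/η)) := by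
    filter_upwards [eventually_gt_atTop (0:ℝ)] with η hη
    set r := Real.sqrt (η * (η + c)) with hr
    have hr0 : 0 ≤ r := Real.sqrt_nonneg _
    have hrsq : r^2 = η * (η + c) := Real.sq_sqrt (by positivity)
    have h1 : Real.sqrt (1 + c/η) = r/η := by
      rw [show 1 + c/η = (η*(η+c))/η^2 by field_simp,
        Real.sqrt_div (by positivity), Real.sqrt_sq hη.le]
    rw [h1]
    have hd : 0 < 1 + r/η := by positivity
    field_simp
    nlinarith [hrsq]
  have hlim : Tendsto (fun η : ℝ => -c / (1 + Real.sqrt (1 + c/η))) atTop (nhds (-c/2)) := by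
    have h0 : Tendsto (fun η : ℝ => 1 + c/η) atTop (nhds 1) := by
      simpa using (tendsto_const_nhds (x := (1:ℝ))).add
        ((tendsto_inv_atTop_zero).const_mul c |>.congr (fun η => by rw [div_eq_mul_inv]))
    have h1 : Tendsto (fun η : ℝ => 1 + Real.sqrt (1 + c/η)) atTop (nhds 2) := by
      have := (Real.continuous_sqrt.tendsto 1).comp h0
      simp only [Real.sqrt_one] at this
      simpa [one_add_one_eq_two] using (tendsto_const_nhds (x := (1:ℝ))).add this
    have := (tendsto_const_nhds (x := -c)).div h1 (by norm_num)
    exact this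
  exact hlim.congr' (heq.mono fun η h => h.symm)

lemma alg_aux (a b k E e : ℝ) (ha : a ≠ 0) (hb : b ≠ 0) (hE : E ≠ 0) :
    (2*(a*b)*k)⁻¹ * e = (2*b)⁻¹ * ((a*(E*k))⁻¹ * (E*e)) := by
  rcases eq_or_ne k 0 with h|h
  · simp [h]
  field_simp

/-- Pointwise convergence of the hyperbolic density to the normal density as the
shape parameter tends to infinity. -/
theorem hyperbolic_tendsto_normal (ρ2 x : ℝ) (hρ : 0 < ρ2) :
    Tendsto
      (fun η : ℝ => (2 * Real.sqrt (η * ρ2) * besselK 1 η)⁻¹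
        * Real.exp (-Real.sqrt (η * (η + x ^ 2 / ρ2))))
      atTop
      (nhds ((2 * π * ρ2) ^ (-(1 : ℝ) / 2) * Real.exp (-x ^ 2 / (2 * ρ2)))) := by
  have hc0 : 0 ≤ x^2/ρ2 := by positivity
  have hπ : Real.sqrt (π/2) ≠ 0 := ne_of_gt (Real.sqrt_pos.mpr (by positivity))
  have hB : Tendsto (fun η : ℝ => Real.exp (η - Real.sqrt (η * (η + x^2/ρ2)))) atTop
      (nhds (Real.exp (-(x^2/ρ2)/2))) :=
    (Real.continuous_exp.tendsto _).comp (exp_part_tendsto (x^2/ρ2) hc0)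
  have hmain : Tendsto (fun η : ℝ =>
      (2*Real.sqrt ρ2)⁻¹ * ((Real.sqrt η * (Real.exp η * besselK 1 η))⁻¹
        * Real.exp (η - Real.sqrt (η * (η + x^2/ρ2))))) atTop
      (nhds ((2*Real.sqrt ρ2)⁻¹ * ((Real.sqrt (π/2))⁻¹ * Real.exp (-(x^2/ρ2)/2)))) :=
    tendsto_const_nhds.mul ((besselK_asymp.inv₀ hπ).mul hB)
  have hL : (2*Real.sqrt ρ2)⁻¹ * ((Real.sqrt (π/2))⁻¹ * Real.exp (-(x^2/ρ2)/2))
      = (2 * π * ρ2) ^ (-(1 : ℝ) / 2) * Real.exp (-x ^ 2 / (2 * ρ2)) := by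
    have h1 : (2*π*ρ2:ℝ)^(-(1:ℝ)/2) = (Real.sqrt (2*π*ρ2))⁻¹ := by
      rw [show (-(1:ℝ)/2) = -(1/2) by norm_num, Real.rpow_neg (by positivity),
        ← Real.sqrt_eq_rpow]
    have hs : (2*Real.sqrt ρ2*Real.sqrt (π/2))^2 = 2*π*ρ2 := by
      rw [mul_pow, mul_pow, Real.sq_sqrt hρ.le, Real.sq_sqrt (by positivity)]; ring
    have h2 : Real.sqrt (2*π*ρ2) = 2*Real.sqrt ρ2*Real.sqrt (π/2) := by
      rw [← hs, Real.sqrt_sq (by positivity)]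
    have h3 : Real.exp (-(x^2/ρ2)/2) = Real.exp (-x^2/(2*ρ2)) := by congr 1; ring
    rw [h1, h2, h3, ← mul_assoc]
    congr 1
    ring
  rw [← hL]
  refine hmain.congr' ?_
  filter_upwards [eventually_gt_atTop (0:ℝ)] with η hη
  have ha : Real.sqrt η ≠ 0 := ne_of_gt (Real.sqrt_pos.mpr hη)
  have hb : Real.sqrt ρ2 ≠ 0 := ne_of_gt (Real.sqrt_pos.mpr hρ)
  rw [sub_eq_add_neg, Real.exp_add]
  rw [← alg_aux (Real.sqrt η) (Real.sqrt ρ2) (besselK 1 η) (Real.exp η)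
    (Real.exp (-Real.sqrt (η * (η + x^2/ρ2)))) ha hb (Real.exp_ne_zero η)]
  rw [Real.sqrt_mul hη.le]
  rw [Real.sqrt_mul hη.le ρ2]
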